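/- Let φ* : [0,T_g] → ℝᵐ be a continuous control trajectory each of whose m coordinate functions is Lipschitz continuous with constant α ≥ 0, let Δt > 0, let u* (t) = φ*(⌊t/Δt⌋·Δt) be its step-function approximation, and let u : [0,T_g] → ℝᵐ be any control trajectory with sup_{t ∈ [0,T_g]} ‖u(t) − u*(t)‖₁ ≤ ε. Let γ_{φ*} and γ_u be the state-space paths induced by φ* and u from the same initial state x₀. Then ‖γ_{φ*}(t) − γ_u(t)‖₁ ≤ (m·α·Δt + ε)·(exp(L_p·T_g) − 1) for every t ∈ [0,T_g]. -/
import Mathlib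


open Real Set

lemma pilp1_norm_eq {m : ℕ} (x : PiLp 1 (fun _ : Fin m => ℝ)) :
    ‖x‖ = ∑ i, |x i| := by
  have := PiLp.norm_eq_sum (p := 1) (by norm_num) x
  simpa using this

/-- Equation (8) of the paper: if `u*` is the `Δt` step-function approximation of the
(coordinatewise `α`-Lipschitz) optimal trajectory `φ*` and `u` is `ε`-close to `u*`,
then the induced state-space paths (through the Lipschitz dynamics `f`, from the same
initial state) satisfy `‖γ_{φ*}(t) − γ_u(t)‖₁ ≤ (m·α·Δt + ε)·(e^{L_p T_g} − 1)`. -/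
theorem stmt_4 (n m : ℕ) (Lp Tg α Δt ε : ℝ) (hLp : 0 < Lp) (hTg : 0 < Tg)
    (hα : 0 ≤ α) (hΔt : 0 < Δt) (hε : 0 ≤ ε)
    (f : PiLp 1 (fun _ : Fin n => ℝ) → PiLp 1 (fun _ : Fin m => ℝ) → ℝ →
      PiLp 1 (fun _ : Fin n => ℝ))
    (hf : ∀ x y u v, ∀ t ∈ Icc (0:ℝ) Tg,
      ‖f x u t - f y v t‖ ≤ Lp * (‖x - y‖ + ‖u - v‖))
    (φs us u : ℝ → PiLp 1 (fun _ : Fin m => ℝ))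
    (hφs : ContinuousOn φs (Icc 0 Tg))
    (hφsLip : ∀ i : Fin m, ∀ s ∈ Icc (0:ℝ) Tg, ∀ t ∈ Icc (0:ℝ) Tg,
      |φs t i - φs s i| ≤ α * |t - s|)
    (hus : ∀ t, us t = φs ((⌊t / Δt⌋ : ℝ) * Δt))
    (hclose : ∀ t ∈ Icc (0:ℝ) Tg, ‖u t - us t‖ ≤ ε)
    (x₀ : PiLp 1 (fun _ : Fin n => ℝ))
    (γφs γu : ℝ → PiLp 1 (fun _ : Fin n => ℝ))
    (hγφs0 : γφs 0 = x₀) (hγu0 : γu 0 = x₀)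
    (hγφs : ∀ t ∈ Icc (0:ℝ) Tg, HasDerivAt γφs (f (γφs t) (φs t) t) t)
    (hγu : ∀ t ∈ Icc (0:ℝ) Tg, HasDerivAt γu (f (γu t) (u t) t) t) :
    ∀ t ∈ Icc (0:ℝ) Tg,
      ‖γφs t - γu t‖ ≤ (m * α * Δt + ε) * (Real.exp (Lp * Tg) - 1) := by
  set C : ℝ := m * α * Δt + ε with hC
  have hC0 : 0 ≤ C := by positivity
  -- bound ‖φs t - u t‖ ≤ C on [0, Tg]
  have hctrl : ∀ t ∈ Icc (0:ℝ) Tg, ‖φs t - u t‖ ≤ C := by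
    intro t ht
    set s : ℝ := (⌊t / Δt⌋ : ℝ) * Δt with hs
    have hs0 : 0 ≤ s := by
      apply mul_nonneg _ hΔt.le
      exact_mod_cast Int.floor_nonneg.2 (div_nonneg ht.1 hΔt.le)
    have hst : s ≤ t := by
      rw [hs]
      calc (⌊t / Δt⌋ : ℝ) * Δt ≤ (t / Δt) * Δt := by
            exact mul_le_mul_of_nonneg_right (Int.floor_le _) hΔt.le
        _ = t := by field_simp
    have hsmem : s ∈ Icc (0:ℝ) Tg := ⟨hs0, hst.trans ht.2⟩
    have hts : |t - s| ≤ Δt := by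
      rw [abs_of_nonneg (by linarith)]
      have := Int.lt_floor_add_one (t / Δt)
      have : t / Δt < ⌊t / Δt⌋ + 1 := this
      nlinarith [mul_lt_mul_of_pos_right this hΔt, (div_mul_cancel₀ t hΔt.ne')]
    have h1 : ‖φs t - us t‖ ≤ m * α * Δt := by
      rw [pilp1_norm_eq]
      have : ∀ i : Fin m, |(φs t - us t) i| ≤ α * Δt := by
        intro i
        have := hφsLip i s hsmem t ht
        rw [hus t, ← hs]
        simp only [PiLp.sub_apply]
        calc |φs t i - φs s i| ≤ α * |t - s| := this
          _ ≤ α * Δt := mul_le_mul_of_nonneg_left hts hα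
      calc ∑ i, |(φs t - us t) i| ≤ ∑ _i : Fin m, α * Δt :=
            Finset.sum_le_sum fun i _ => this i
        _ = m * α * Δt := by simp [mul_assoc]
    have h2 : ‖us t - u t‖ ≤ ε := by
      rw [← norm_neg]; simpa [neg_sub] using hclose t ht
    calc ‖φs t - u t‖ = ‖(φs t - us t) + (us t - u t)‖ := by rw [sub_add_sub_cancel]
      _ ≤ ‖φs t - us t‖ + ‖us t - u t‖ := norm_add_le _ _
      _ ≤ m * α * Δt + ε := add_le_add h1 h2
  -- apply Grönwall to g = γφs - γu
  have key : ∀ t ∈ Icc (0:ℝ) Tg,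
      ‖γφs t - γu t‖ ≤ gronwallBound 0 Lp (Lp * C) (t - 0) := by
    apply norm_le_gronwallBound_of_norm_deriv_right_le
      (f := fun t => γφs t - γu t)
      (f' := fun t => f (γφs t) (φs t) t - f (γu t) (u t) t)
    · intro t ht
      exact ((hγφs t ht).continuousAt.sub (hγu t ht).continuousAt).continuousWithinAt
    · intro t ht
      have ht' : t ∈ Icc (0:ℝ) Tg := ⟨ht.1, ht.2.le⟩
      exact (((hγφs t ht').sub (hγu t ht')).hasDerivWithinAt)
    · simp [hγφs0, hγu0]
    · intro t ht
      have ht' : t ∈ Icc (0:ℝ) Tg := ⟨ht.1, ht.2.le⟩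
      calc ‖f (γφs t) (φs t) t - f (γu t) (u t) t‖
          ≤ Lp * (‖γφs t - γu t‖ + ‖φs t - u t‖) := hf _ _ _ _ t ht'
        _ ≤ Lp * (‖γφs t - γu t‖ + C) := by
            have := hctrl t ht'
            nlinarith
        _ = Lp * ‖γφs t - γu t‖ + Lp * C := by ring
  intro t ht
  have := key t ht
  rw [gronwallBound_of_K_ne_0 hLp.ne'] at this
  have hexp : Real.exp (Lp * t) ≤ Real.exp (Lp * Tg) :=
    Real.exp_le_exp.2 (mul_le_mul_of_nonneg_left ht.2 hLp.le)
  have hbound : Lp * C / Lp * (Real.exp (Lp * (t - 0)) - 1)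
      ≤ C * (Real.exp (Lp * Tg) - 1) := by
    have hLC : Lp * C / Lp = C := by field_simp
    rw [hLC, sub_zero]
    exact mul_le_mul_of_nonneg_left (by linarith) hC0
  calc ‖γφs t - γu t‖ ≤ 0 * Real.exp (Lp * (t - 0)) + Lp * C / Lp * (Real.exp (Lp * (t - 0)) - 1) := this
    _ = Lp * C / Lp * (Real.exp (Lp * (t - 0)) - 1) := by ring
    _ ≤ C * (Real.exp (Lp * Tg) - 1) := hbound
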